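/- Every closed submonoid of a locally right Garside monoid is itself locally right Garside. -/
import Mathlib


/-- `y` right-divides `x`, i.e. `x` is a left multiple of `y`. -/
def RDiv {M : Type*} [Monoid M] (x y : M) : Prop := ∃ z, x = z * y

/-- `z` is a left lcm of `a` and `b`: it is a common left multiple of `a` and `b`, and
every common left multiple of `a` and `b` is a left multiple of `z`. -/
def IsLeftLcm {M : Type*} [Monoid M] (z a b : M) : Prop :=
  RDiv z a ∧ RDiv z b ∧ ∀ w, RDiv w a → RDiv w b → RDiv w z

/-- A monoid is locally right Garside if it is right cancellative, any two elements
admitting a common left multiple admit a left lcm, and, for every `x`, there is no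
infinite strictly increasing chain of right divisors of `x`. -/
structure LocallyRightGarside (M : Type*) [Monoid M] : Prop where
  rightCancel : ∀ x y z : M, x * z = y * z → x = y
  lcm : ∀ a b : M, (∃ w, RDiv w a ∧ RDiv w b) → ∃ z, IsLeftLcm z a b
  noChain : ∀ x : M, ¬ ∃ f : ℕ → M,
      (∀ k, RDiv x (f k)) ∧ (∀ k, ∃ w, w ≠ 1 ∧ f (k + 1) = w * f k)

/-- `t` is the `A`-tail of `x`: a right divisor of `x` lying in `A` which is maximal
with respect to right divisibility. -/
def IsTail {M : Type*} [Monoid M] (A : Set M) (x t : M) : Prop :=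
  t ∈ A ∧ RDiv x t ∧ ∀ a ∈ A, RDiv x a → RDiv t a

/-- A submonoid is closed if it is closed under left lcm and under left divisor. -/
def ClosedSubmonoid {M : Type*} [Monoid M] (M₁ : Submonoid M) : Prop :=
  (∀ a ∈ M₁, ∀ b ∈ M₁, ∀ z : M, IsLeftLcm z a b → z ∈ M₁) ∧
  (∀ a ∈ M₁, ∀ y z : M, a = y * z → y ∈ M₁)

/-- Every closed submonoid of a locally right Garside monoid is itself
locally right Garside. -/
theorem closedSubmonoid_locallyRightGarside {M : Type*} [Monoid M]
    (h : LocallyRightGarside M) (M₁ : Submonoid M) (hc : ClosedSubmonoid M₁) :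
    LocallyRightGarside ↥M₁ := by

  obtain ⟨hlcm, hdiv⟩ := hc
  constructor
  · intro x y z hxz
    ext
    exact h.rightCancel x y z (by exact_mod_cast congrArg (Subtype.val) hxz)
  · rintro a b ⟨w, ⟨u, hu⟩, ⟨v, hv⟩⟩
    obtain ⟨z, ⟨p, hp⟩, ⟨q, hq⟩, hmin⟩ := h.lcm (a : M) (b : M)
      ⟨w, ⟨u, by exact_mod_cast congrArg Subtype.val hu⟩,
        ⟨v, by exact_mod_cast congrArg Subtype.val hv⟩⟩
    have hz : z ∈ M₁ := hlcm a a.2 b b.2 z ⟨⟨p, hp⟩, ⟨q, hq⟩, hmin⟩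
    have hpM : p ∈ M₁ := hdiv z hz p a hp
    have hqM : q ∈ M₁ := hdiv z hz q b hq
    refine ⟨⟨z, hz⟩, ⟨⟨p, hpM⟩, Subtype.ext hp⟩, ⟨⟨q, hqM⟩, Subtype.ext hq⟩, ?_⟩
    rintro ⟨w, hw⟩ ⟨⟨u, hu'⟩, heq1⟩ ⟨⟨v, hv'⟩, heq2⟩
    obtain ⟨r, hr⟩ := hmin w ⟨u, by simpa using congrArg Subtype.val heq1⟩
      ⟨v, by simpa using congrArg Subtype.val heq2⟩
    exact ⟨⟨r, hdiv w hw r z hr⟩, Subtype.ext hr⟩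
  · rintro x ⟨f, hf1, hf2⟩
    refine h.noChain (x : M) ⟨fun k => (f k : M), fun k => ?_, fun k => ?_⟩
    · obtain ⟨z, hz⟩ := hf1 k
      exact ⟨z, by simpa using congrArg Subtype.val hz⟩
    · obtain ⟨w, hw1, hw2⟩ := hf2 k
      exact ⟨w, fun hcontra => hw1 (Subtype.ext hcontra),
        by simpa using congrArg Subtype.val hw2⟩
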